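/- Suppose τ̃ dominates τ (i.e. τ(α) ≤ τ(β) implies τ̃(α) ≤ τ̃(β) for all α, β ∈ C). Let κ : {1,…,n} → C and α = κ({1,…,n}). Then S({1,…,n},≤,κ,τ,τ̃) = 1 if τ(κ(1)) > τ(κ(2)) > ⋯ > τ(κ(n)) and τ̃(κ(i)) = τ̃(α) for all i = 1,…,n, and S({1,…,n},≤,κ,τ,τ̃) = 0 otherwise. -/

import Mathlib

open scoped Classical
open Finset Function

/-- A weak stability function on `C ⊆ A` with values in a total order:
whenever `α, γ ∈ C` (so that `β = α + γ`), either `τ α ≤ τ β ≤ τ γ` or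
`τ α ≥ τ β ≥ τ γ`. -/
def WeakStability {A T : Type*} [AddCommGroup A] [LinearOrder T] (C : Set A) (τ : A → T) : Prop :=
  ∀ α γ : A, α ∈ C → γ ∈ C →
    (τ α ≤ τ (α + γ) ∧ τ (α + γ) ≤ τ γ) ∨ (τ γ ≤ τ (α + γ) ∧ τ (α + γ) ≤ τ α)

/-- Sum `κ 0 + ⋯ + κ i`. -/
def lowSum {A : Type*} [AddCommGroup A] (κ : ℕ → A) (i : ℕ) : A :=
  ∑ j ∈ Finset.range (i + 1), κ j

/-- Sum `κ (i+1) + ⋯ + κ (n-1)`. -/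
def highSum {A : Type*} [AddCommGroup A] (κ : ℕ → A) (i n : ℕ) : A :=
  ∑ j ∈ Finset.Ico (i + 1) n, κ j

/-- Condition (a) at position `i` in the definition of the coefficient `S`. -/
def SCondA {A T T' : Type*} [AddCommGroup A] [LinearOrder T] [LinearOrder T']
    (τ : A → T) (τ' : A → T') (n : ℕ) (κ : ℕ → A) (i : ℕ) : Prop :=
  τ (κ i) ≤ τ (κ (i + 1)) ∧ τ' (highSum κ i n) < τ' (lowSum κ i)

/-- Condition (b) at position `i` in the definition of the coefficient `S`. -/
def SCondB {A T T' : Type*} [AddCommGroup A] [LinearOrder T] [LinearOrder T']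
    (τ : A → T) (τ' : A → T') (n : ℕ) (κ : ℕ → A) (i : ℕ) : Prop :=
  τ (κ (i + 1)) < τ (κ i) ∧ τ' (lowSum κ i) ≤ τ' (highSum κ i n)

/-- The transformation coefficient `S({1,…,n},≤,κ,τ,τ')` for the sequence
`κ 0, …, κ (n-1)` (indexed from `0`). -/
noncomputable def Scoeff {A T T' : Type*} [AddCommGroup A] [LinearOrder T] [LinearOrder T']
    (τ : A → T) (τ' : A → T') (n : ℕ) (κ : ℕ → A) : ℤ :=
  if ∀ i ∈ Finset.range (n - 1), SCondA τ τ' n κ i ∨ SCondB τ τ' n κ i then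
    (-1) ^ ((Finset.range (n - 1)).filter (SCondA τ τ' n κ)).card
  else 0

/-- The sequence `κ 0, …, κ (n-1)` is `τ`-reversing. -/
def Reversing {A T : Type*} [AddCommGroup A] [LinearOrder T] (τ : A → T) (n : ℕ) (κ : ℕ → A) :
    Prop :=
  ∀ i, i + 1 < n → τ (κ (i + 1)) < τ (κ i)

/-- The sequence `κ 0, …, κ (n-1)` is `τ`-semistable. -/
def Semistable {A T : Type*} [AddCommGroup A] [LinearOrder T] (τ : A → T) (n : ℕ) (κ : ℕ → A) :
    Prop :=
  ∀ i, i + 1 < n → τ (lowSum κ i) ≤ τ (highSum κ i n)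

/-- Extend a `Fin n`-indexed sequence to `ℕ` by zero. -/
def toSeq {A : Type*} [AddCommGroup A] {n : ℕ} (κ : Fin n → A) : ℕ → A :=
  fun j => if h : j < n then κ ⟨j, h⟩ else 0

/-- The subsequence of `κ` on a subset `s ⊆ Fin n`, enumerated in increasing order. -/
noncomputable def fiberSeq {A : Type*} [AddCommGroup A] {n : ℕ} (κ : Fin n → A)
    (s : Finset (Fin n)) : ℕ → A :=
  fun j => if h : j < s.card then κ (s.orderIsoOfFin rfl ⟨j, h⟩).1 else 0

/-- The transformation coefficient `U({1,…,n},≤,κ,τ,τ')`. -/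
noncomputable def Ucoeff {A T T' : Type*} [AddCommGroup A] [LinearOrder T] [LinearOrder T']
    (τ : A → T) (τ' : A → T') (n : ℕ) (κ : ℕ → A) : ℚ :=
  ∑ l ∈ Finset.Icc 1 n, ∑ m ∈ Finset.Icc l n,
    ∑ p ∈ Finset.univ.filter
        (fun p : (Fin n → Fin m) × (Fin m → Fin l) =>
          Surjective p.1 ∧ Monotone p.1 ∧ Surjective p.2 ∧ Monotone p.2),
      (if (∀ i : Fin n, τ (κ i.1) =
              τ (∑ j ∈ Finset.univ.filter (fun j : Fin n => p.1 j = p.1 i), κ j.1)) ∧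
          (∀ a : Fin l,
              τ' (∑ j ∈ Finset.univ.filter (fun j : Fin n => p.2 (p.1 j) = a), κ j.1) =
              τ' (∑ j ∈ Finset.range n, κ j)) then
        (∏ a : Fin l,
          ((Scoeff τ τ' (Finset.univ.filter (fun b : Fin m => p.2 b = a)).card
            (fiberSeq
              (fun b : Fin m => ∑ j ∈ Finset.univ.filter (fun j : Fin n => p.1 j = b), κ j.1)
              (Finset.univ.filter (fun b : Fin m => p.2 b = a)))) : ℚ))
        * ((-1 : ℚ) ^ (l - 1) / (l : ℚ))
        * ∏ b : Fin m,
            ((1 : ℚ) / (Nat.factorial (Finset.univ.filter (fun j : Fin n => p.1 j = b)).card : ℚ))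
      else 0)

theorem stmt9 {A T T' : Type*} [AddCommGroup A] [LinearOrder T] [LinearOrder T']
    (C : Set A) (hC : ∀ a b : A, a ∈ C → b ∈ C → a + b ∈ C) (h0 : (0 : A) ∉ C)
    (τ : A → T) (τt : A → T') (hτ : WeakStability C τ) (hτt : WeakStability C τt)
    (hdom : ∀ α β : A, α ∈ C → β ∈ C → τ α ≤ τ β → τt α ≤ τt β)
    (n : ℕ) (hn : 1 ≤ n) (κ : ℕ → A) (hκ : ∀ i, i < n → κ i ∈ C) :
    Scoeff τ τt n κ =
      if (∀ i, i + 1 < n → τ (κ (i + 1)) < τ (κ i)) ∧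
         (∀ i, i < n → τt (κ i) = τt (∑ j ∈ Finset.range n, κ j)) then 1 else 0 := by
  classical
  set α : A := ∑ j ∈ Finset.range n, κ j with hα
  -- basic sum identities
  have hlow0 : lowSum κ 0 = κ 0 := by simp [lowSum]
  have hlowsucc : ∀ i, lowSum κ (i+1) = lowSum κ i + κ (i+1) := by
    intro i; simp [lowSum, Finset.sum_range_succ]
  have hlowtop : lowSum κ (n-1) = α := by
    have h : n - 1 + 1 = n := by omega
    rw [lowSum, h, hα]
  have hhighsplit : ∀ i, i + 2 < n → highSum κ i n = κ (i+1) + highSum κ (i+1) n := by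
    intro i h
    rw [highSum, highSum, Finset.sum_eq_sum_Ico_succ_bot (by omega : i+1 < n)]
  have hhightop : ∀ i, i + 2 = n → highSum κ i n = κ (i+1) := by
    intro i h
    rw [highSum, ← h, show i + 2 = (i+1)+1 from rfl]
    simp
  have hsplit : ∀ i, i + 1 < n → lowSum κ i + highSum κ i n = α := by
    intro i h
    rw [lowSum, highSum, hα, Finset.range_eq_Ico, Finset.range_eq_Ico]
    exact Finset.sum_Ico_consecutive κ (by omega : 0 ≤ i + 1) (by omega : i + 1 ≤ n)
  -- memberships
  have hlowmem : ∀ i, i + 1 ≤ n → lowSum κ i ∈ C := by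
    intro i
    induction i with
    | zero => intro h; rw [hlow0]; exact hκ 0 (by omega)
    | succ i ih => intro h; rw [hlowsucc]; exact hC _ _ (ih (by omega)) (hκ _ (by omega))
  have hhighmem : ∀ k i, i + 1 < n → n - 2 - i ≤ k → highSum κ i n ∈ C := by
    intro k
    induction k with
    | zero =>
      intro i h1 h2
      rw [hhightop i (by omega)]; exact hκ _ (by omega)
    | succ k ih =>
      intro i h1 h2
      by_cases h3 : i + 2 < n
      · rw [hhighsplit i h3]
        exact hC _ _ (hκ _ (by omega)) (ih (i+1) (by omega) (by omega))
      · rw [hhightop i (by omega)]; exact hκ _ (by omega)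
  have hhighmem' : ∀ i, i + 1 < n → highSum κ i n ∈ C := fun i h => hhighmem _ i h le_rfl
  -- seesaw helpers for τt
  have sandwich : ∀ x y : A, x ∈ C → y ∈ C → τt x ≤ τt y →
      τt x ≤ τt (x + y) ∧ τt (x + y) ≤ τt y := by
    intro x y hx hy hxy
    rcases hτt x y hx hy with ⟨h1, h2⟩ | ⟨h1, h2⟩
    · exact ⟨h1, h2⟩
    · exact ⟨le_trans hxy h1, le_trans h2 hxy⟩
  have smax : ∀ x y : A, x ∈ C → y ∈ C → τt (x + y) ≤ max (τt x) (τt y) := by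
    intro x y hx hy
    rcases hτt x y hx hy with ⟨h1, h2⟩ | ⟨h1, h2⟩
    · exact le_trans h2 (le_max_right _ _)
    · exact le_trans h2 (le_max_left _ _)
  have smin : ∀ x y : A, x ∈ C → y ∈ C → min (τt x) (τt y) ≤ τt (x + y) := by
    intro x y hx hy
    rcases hτt x y hx hy with ⟨h1, h2⟩ | ⟨h1, h2⟩
    · exact le_trans (min_le_left _ _) h1
    · exact le_trans (min_le_right _ _) h1
  have hBseesaw : ∀ i, i + 1 < n → τt (lowSum κ i) ≤ τt (highSum κ i n) →
      τt (lowSum κ i) ≤ τt α ∧ τt α ≤ τt (highSum κ i n) := by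
    intro i h hle
    have := sandwich _ _ (hlowmem i (by omega)) (hhighmem' i h) hle
    rwa [hsplit i h] at this
  by_cases hcond : ∀ i ∈ Finset.range (n-1), SCondA τ τt n κ i ∨ SCondB τ τt n κ i
  · have hA' : ∀ i, i + 1 < n → ¬ SCondB τ τt n κ i → SCondA τ τt n κ i := by
      intro i h hnB
      rcases hcond i (Finset.mem_range.mpr (by omega)) with h' | h'
      · exact h'
      · exact absurd h' hnB
    have Jdesc : ∀ i, i + 1 < n → τt (highSum κ i n) < τt α → τt (κ (i+1)) < τt α → False := by
      intro i
      induction i with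
      | zero =>
        intro h hh hk
        have hnB : ¬ SCondB τ τt n κ 0 := fun hB =>
          absurd (hBseesaw 0 h hB.2).2 (not_le.mpr hh)
        have hA := hA' 0 h hnB
        have hk0 : τt (κ 0) ≤ τt (κ 1) := hdom _ _ (hκ 0 (by omega)) (hκ 1 h) hA.1
        have hsum := hsplit 0 h
        rw [hlow0] at hsum
        have hm := smax (κ 0) (highSum κ 0 n) (hκ 0 (by omega)) (hhighmem' 0 h)
        rw [hsum] at hm
        exact absurd (lt_of_le_of_lt hm (max_lt (lt_of_le_of_lt hk0 hk) hh)) (lt_irrefl _)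
      | succ i ih =>
        intro h hh hk
        have hnB : ¬ SCondB τ τt n κ (i+1) := fun hB =>
          absurd (hBseesaw (i+1) h hB.2).2 (not_le.mpr hh)
        have hA := hA' (i+1) h hnB
        have hk1 : τt (κ (i+1)) ≤ τt (κ (i+1+1)) :=
          hdom _ _ (hκ _ (by omega)) (hκ _ (by omega)) hA.1
        have hk1' : τt (κ (i+1)) < τt α := lt_of_le_of_lt hk1 hk
        have hm := smax (κ (i+1)) (highSum κ (i+1) n) (hκ _ (by omega)) (hhighmem' (i+1) h)
        rw [← hhighsplit i (by omega)] at hm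
        exact ih (by omega) (lt_of_le_of_lt hm (max_lt hk1' hh)) hk1'
    have Jasc : ∀ k i, i + 1 < n → n - 1 - i ≤ k →
        τt α < τt (lowSum κ i) → τt α < τt (κ i) → False := by
      intro k
      induction k with
      | zero => intro i h hk _ _; omega
      | succ k ih =>
        intro i h hk hl hki
        have hnB : ¬ SCondB τ τt n κ i := fun hB =>
          absurd (hBseesaw i h hB.2).1 (not_le.mpr hl)
        have hA := hA' i h hnB
        have hki1 : τt α < τt (κ (i+1)) :=
          lt_of_lt_of_le hki (hdom _ _ (hκ _ (by omega)) (hκ _ (by omega)) hA.1)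
        have hmin := smin (lowSum κ i) (κ (i+1)) (hlowmem i (by omega)) (hκ _ (by omega))
        rw [← hlowsucc i] at hmin
        have hl1 : τt α < τt (lowSum κ (i+1)) := lt_of_lt_of_le (lt_min hl hki1) hmin
        by_cases h2 : i + 2 < n
        · exact ih (i+1) h2 (by omega) hl1 hki1
        · have he : i + 1 = n - 1 := by omega
          rw [he, hlowtop] at hl1
          exact lt_irrefl _ hl1
    have lowLem : ∀ i, i + 1 < n → τt α < τt (lowSum κ i) → False := by
      intro i
      induction i with
      | zero =>
        intro h hl
        by_cases hk : τt α < τt (κ 0)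
        · exact Jasc (n-1) 0 h (by omega) hl hk
        · rw [hlow0] at hl; exact hk hl
      | succ i ih =>
        intro h hl
        by_cases hk : τt α < τt (κ (i+1))
        · exact Jasc (n-1) (i+1) h (by omega) hl hk
        · have hmax := smax (lowSum κ i) (κ (i+1)) (hlowmem i (by omega)) (hκ _ (by omega))
          rw [← hlowsucc i] at hmax
          rcases lt_max_iff.mp (lt_of_lt_of_le hl hmax) with h' | h'
          · exact ih (by omega) h'
          · exact hk h'
    have highLem : ∀ k i, i + 1 < n → n - 2 - i ≤ k → τt (highSum κ i n) < τt α → False := by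
      intro k
      induction k with
      | zero =>
        intro i h hk hh
        by_cases hki : τt (κ (i+1)) < τt α
        · exact Jdesc i h hh hki
        · rw [hhightop i (by omega)] at hh; exact hki hh
      | succ k ih =>
        intro i h hk hh
        by_cases hki : τt (κ (i+1)) < τt α
        · exact Jdesc i h hh hki
        · by_cases h2 : i + 2 < n
          · have hmin := smin (κ (i+1)) (highSum κ (i+1) n) (hκ _ (by omega)) (hhighmem' (i+1) h2)
            rw [← hhighsplit i h2] at hmin
            rcases min_lt_iff.mp (lt_of_le_of_lt hmin hh) with h' | h'
            · exact hki h'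
            · exact ih (i+1) h2 (by omega) h'
          · rw [hhightop i (by omega)] at hh; exact hki hh
    have hB : ∀ i, i + 1 < n → SCondB τ τt n κ i := by
      intro i h
      by_contra hnB
      have hA := hA' i h hnB
      by_cases hh : τt (highSum κ i n) < τt α
      · exact highLem (n-2) i h (by omega) hh
      · exact lowLem i h (lt_of_le_of_lt (not_lt.mp hh) hA.2)
    have hdec : ∀ i, i + 1 < n → τt (κ (i+1)) ≤ τt (κ i) := fun i h =>
      hdom _ _ (hκ _ h) (hκ _ (by omega)) (le_of_lt (hB i h).1)
    have hmono : ∀ j, j < n → ∀ i, i ≤ j → τt (κ j) ≤ τt (κ i) := by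
      intro j
      induction j with
      | zero => intro _ i hi; obtain rfl : i = 0 := Nat.le_zero.mp hi; exact le_rfl
      | succ j ih =>
        intro h i hi
        rcases Nat.eq_or_lt_of_le hi with he | hlt
        · subst he; exact le_rfl
        · exact le_trans (hdec j h) (ih (by omega) i (by omega))
    have hconst : ∀ i, i < n → τt (κ i) = τt α := by
      intro i hi
      rcases Nat.lt_or_ge n 2 with h2 | h2
      · have hi0 : i = 0 := by omega
        subst hi0
        have he : α = κ 0 := by
          rw [← hlowtop, show n - 1 = 0 by omega, hlow0]
        rw [he]
      · have h0 : τt (κ 0) ≤ τt α := by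
          have := (hBseesaw 0 (by omega) (hB 0 (by omega)).2).1
          rwa [hlow0] at this
        have hlast : τt α ≤ τt (κ (n-1)) := by
          have h' : (n-2) + 1 < n := by omega
          have := (hBseesaw (n-2) h' (hB (n-2) h').2).2
          rwa [hhightop (n-2) (by omega), show n - 2 + 1 = n - 1 by omega] at this
        have a1 : τt (κ (n-1)) ≤ τt (κ i) := hmono (n-1) (by omega) i (by omega)
        have a2 : τt (κ i) ≤ τt (κ 0) := hmono i hi 0 (by omega)
        exact le_antisymm (le_trans a2 h0) (le_trans hlast a1)
    have hfilter : Finset.filter (SCondA τ τt n κ) (Finset.range (n-1)) = ∅ := by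
      apply Finset.filter_eq_empty_iff.mpr
      intro i hi hA
      have h : i + 1 < n := by have := Finset.mem_range.mp hi; omega
      exact absurd hA.2 (not_lt.mpr (hB i h).2)
    rw [Scoeff, if_pos hcond, hfilter]
    rw [if_pos ⟨fun i h => (hB i h).1, hconst⟩]
    simp
  · have hnot : ¬ ((∀ i, i + 1 < n → τ (κ (i + 1)) < τ (κ i)) ∧
        ∀ i, i < n → τt (κ i) = τt α) := by
      rintro ⟨hrev, hconst⟩
      apply hcond
      intro i hi
      have h : i + 1 < n := by have := Finset.mem_range.mp hi; omega
      right
      refine ⟨hrev i h, ?_⟩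
      have hlowc : ∀ j, j + 1 ≤ n → τt (lowSum κ j) = τt α := by
        intro j
        induction j with
        | zero => intro hj; rw [hlow0]; exact hconst 0 (by omega)
        | succ j ih =>
          intro hj
          rw [hlowsucc]
          have h1 := ih (by omega)
          have h2 := hconst (j+1) (by omega)
          have hle : τt (lowSum κ j) ≤ τt (κ (j+1)) := by rw [h1, h2]
          obtain ⟨t1, t2⟩ := sandwich _ _ (hlowmem j (by omega)) (hκ _ (by omega)) hle
          rw [h1] at t1; rw [h2] at t2
          exact le_antisymm t2 t1
      have hhighc : ∀ k j, j + 1 < n → n - 2 - j ≤ k → τt (highSum κ j n) = τt α := by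
        intro k
        induction k with
        | zero =>
          intro j h1 h2
          rw [hhightop j (by omega)]; exact hconst _ (by omega)
        | succ k ih =>
          intro j h1 h2
          by_cases h3 : j + 2 < n
          · rw [hhighsplit j h3]
            have hk1 := hconst (j+1) (by omega)
            have hh1 := ih (j+1) h3 (by omega)
            have hle : τt (κ (j+1)) ≤ τt (highSum κ (j+1) n) := by rw [hk1, hh1]
            obtain ⟨t1, t2⟩ := sandwich _ _ (hκ _ (by omega)) (hhighmem' (j+1) h3) hle
            rw [hk1] at t1; rw [hh1] at t2
            exact le_antisymm t2 t1
          · rw [hhightop j (by omega)]; exact hconst _ (by omega)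
      rw [hlowc i (by omega), hhighc (n-2) i h (by omega)]
    rw [Scoeff, if_neg hcond, if_neg hnot]
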